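/- For every κ > 0 and every δ > 0 there exists a positive constant C₂ depending only on κ and δ such that for all α ≥ δ and all β > 0 one has ∫_{[0,∞)} x^κ m_{α,β}(dx) ≥ C₂ α^κ/β^κ. -/

import Mathlib

open MeasureTheory Filter Set
open scoped ENNReal

/-- The modified Bessel function of the first kind of order one,
`I₁(r) = (r/2) Σ_{k=0}^∞ (r²/4)^k / (k!(k+1)!)`. -/
noncomputable def besselI1 (r : ℝ) : ℝ :=
  r / 2 * ∑' k : ℕ, (r ^ 2 / 4) ^ k / ((Nat.factorial k : ℝ) * (Nat.factorial (k + 1) : ℝ))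

/-- The Bessel distribution `m_{α,β}` on `[0,∞)`:
`m_{α,β}(dx) = e^{−α} δ₀(dx) + β e^{−α−βx} √(α/(βx)) I₁(2√(αβx)) dx`. -/
noncomputable def besselMeasure (α β : ℝ) : Measure ℝ :=
  ENNReal.ofReal (Real.exp (-α)) • Measure.dirac (0 : ℝ) +
    MeasureTheory.volume.withDensity fun x =>
      ENNReal.ofReal (Set.indicator (Set.Ioi (0 : ℝ))
        (fun x => β * Real.exp (-α - β * x) * Real.sqrt (α / (β * x)) *
          besselI1 (2 * Real.sqrt (α * β * x))) x)

lemma summable_aux {y : ℝ} (hy : 0 ≤ y) :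
    Summable fun k : ℕ => y ^ k / ((Nat.factorial k : ℝ) * (Nat.factorial (k + 1) : ℝ)) := by
  refine Summable.of_nonneg_of_le (fun k => by positivity) (fun k => ?_)
    (Real.summable_pow_div_factorial y)
  have hb : (0:ℝ) < (Nat.factorial k : ℝ) := by positivity
  have hc : (Nat.factorial k : ℝ) ≤ (Nat.factorial k : ℝ) * (Nat.factorial (k+1) : ℝ) :=
    le_mul_of_one_le_right hb.le
      (by exact_mod_cast Nat.one_le_iff_ne_zero.mpr (Nat.factorial_ne_zero _))
  gcongr


lemma measurable_besselI1 : Measurable besselI1 := by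
  unfold besselI1
  refine Measurable.mul (by fun_prop) ?_
  refine measurable_of_tendsto_metrizable
    (f := fun n r => ∑ k ∈ Finset.range n,
      (r ^ 2 / 4) ^ k / ((Nat.factorial k : ℝ) * (Nat.factorial (k + 1) : ℝ)))
    (fun n => by fun_prop) ?_
  rw [tendsto_pi_nhds]
  intro r
  exact (summable_aux (by positivity)).hasSum.tendsto_sum_nat

lemma g_series {α β x : ℝ} (hα : 0 < α) (hβ : 0 < β) (hx : 0 < x) :
    β * Real.exp (-α - β * x) * Real.sqrt (α / (β * x)) *
      besselI1 (2 * Real.sqrt (α * β * x))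
    = ∑' k : ℕ, (α * β * Real.exp (-α) *
        ((α * β) ^ k / ((Nat.factorial k : ℝ) * (Nat.factorial (k + 1) : ℝ)))) *
        (x ^ k * Real.exp (-(β * x))) := by
  have habx : (0:ℝ) ≤ α * β * x := by positivity
  have h1 : (2 * Real.sqrt (α * β * x)) ^ 2 / 4 = α * β * x := by
    rw [mul_pow, Real.sq_sqrt habx]; ring
  have h2 : Real.sqrt (α / (β * x)) * Real.sqrt (α * β * x) = α := by
    rw [← Real.sqrt_mul (by positivity)]
    rw [show α / (β * x) * (α * β * x) = α ^ 2 by field_simp]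
    exact Real.sqrt_sq hα.le
  rw [besselI1, h1]
  rw [show ∀ C : ℝ, β * Real.exp (-α - β * x) * Real.sqrt (α / (β * x)) *
      (2 * Real.sqrt (α * β * x) / 2 * C)
      = (α * β * Real.exp (-α - β * x)) * C from fun C => by
    linear_combination (β * Real.exp (-α - β * x) * C) * h2]
  rw [← tsum_mul_left]
  refine tsum_congr fun k => ?_
  rw [show -α - β * x = -α + -(β * x) by ring, Real.exp_add, mul_pow]
  ring

lemma gamma_int {β : ℝ} (hβ : 0 < β) (n : ℕ) :
    ∫⁻ x in Ioi (0:ℝ), ENNReal.ofReal (x ^ n * Real.exp (-(β * x)))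
      = ENNReal.ofReal ((Nat.factorial n : ℝ) / β ^ (n + 1)) := by
  have hint : IntegrableOn (fun x : ℝ => x ^ n * Real.exp (-(β * x))) (Ioi 0) := by
    have := integrableOn_rpow_mul_exp_neg_mul_rpow (p := 1) (s := (n : ℝ)) (b := β)
      (lt_of_lt_of_le neg_one_lt_zero (Nat.cast_nonneg n)) zero_lt_one hβ
    refine this.congr_fun (fun x hx => ?_) measurableSet_Ioi
    dsimp only
    rw [Real.rpow_one, Real.rpow_natCast, neg_mul]
  have hval : ∫ x in Ioi (0:ℝ), x ^ n * Real.exp (-(β * x))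
      = (Nat.factorial n : ℝ) / β ^ (n + 1) := by
    have := Real.integral_rpow_mul_exp_neg_mul_Ioi (a := (n : ℝ) + 1) (r := β)
      (by positivity) hβ
    rw [show ((n : ℝ) + 1) - 1 = (n : ℝ) by ring] at this
    simp_rw [Real.rpow_natCast] at this
    rw [this, Real.Gamma_nat_eq_factorial,
      show ((n : ℝ) + 1) = ((n + 1 : ℕ) : ℝ) by push_cast; ring, Real.rpow_natCast]
    rw [div_pow, one_pow]
    ring
  rw [← hval, ← ofReal_integral_eq_lintegral_ofReal hint]
  filter_upwards [self_mem_ae_restrict measurableSet_Ioi] with x hx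
  have : (0:ℝ) < x := hx
  positivity

noncomputable def cdens (α β : ℝ) : ℝ → ℝ≥0∞ := fun x =>
  ENNReal.ofReal (Set.indicator (Set.Ioi (0 : ℝ))
    (fun x => β * Real.exp (-α - β * x) * Real.sqrt (α / (β * x)) *
      besselI1 (2 * Real.sqrt (α * β * x))) x)

lemma measurable_cdens (α β : ℝ) : Measurable (cdens α β) := by
  apply ENNReal.measurable_ofReal.comp
  apply Measurable.indicator ?_ measurableSet_Ioi
  have h1 := measurable_besselI1
  fun_prop

lemma moment_cont {α β : ℝ} (hα : 0 < α) (hβ : 0 < β) (j : ℕ)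
    (hsum : Summable fun k : ℕ => α ^ (k + 1) *
      ((Nat.factorial (k + j) : ℝ) / ((Nat.factorial k : ℝ) * (Nat.factorial (k + 1) : ℝ)))) :
    ∫⁻ x, ENNReal.ofReal (x ^ j) ∂(volume.withDensity (cdens α β))
      = ENNReal.ofReal (Real.exp (-α) / β ^ j * ∑' k : ℕ, α ^ (k + 1) *
          ((Nat.factorial (k + j) : ℝ) / ((Nat.factorial k : ℝ) * (Nat.factorial (k + 1) : ℝ)))) := by
  rw [lintegral_withDensity_eq_lintegral_mul volume (measurable_cdens α β)
    (show Measurable fun x : ℝ => ENNReal.ofReal (x ^ j) by fun_prop)]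
  have hfun : (cdens α β * fun x : ℝ => ENNReal.ofReal (x ^ j))
      = (Ioi (0:ℝ)).indicator (fun x => ∑' k : ℕ,
          ENNReal.ofReal ((α * β * Real.exp (-α) *
            ((α * β) ^ k / ((Nat.factorial k : ℝ) * (Nat.factorial (k + 1) : ℝ)))) *
            (x ^ (k + j) * Real.exp (-(β * x))))) := by
    funext x
    by_cases hx : x ∈ Ioi (0:ℝ)
    · have hx0 : (0:ℝ) < x := hx
      simp only [Pi.mul_apply, cdens, Set.indicator_of_mem hx]
      rw [g_series hα hβ hx0,
        ← ENNReal.ofReal_mul (tsum_nonneg fun k => by positivity), ← tsum_mul_right,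
        show (∑' k : ℕ, (α * β * Real.exp (-α) *
            ((α * β) ^ k / ((Nat.factorial k : ℝ) * (Nat.factorial (k + 1) : ℝ)))) *
            (x ^ k * Real.exp (-(β * x))) * x ^ j)
          = ∑' k : ℕ, (α * β * Real.exp (-α) *
            ((α * β) ^ k / ((Nat.factorial k : ℝ) * (Nat.factorial (k + 1) : ℝ)))) *
            (x ^ (k + j) * Real.exp (-(β * x))) from tsum_congr fun k => by
              rw [pow_add]; ring]
      refine ENNReal.ofReal_tsum_of_nonneg (fun k => by positivity) ?_
      refine ((summable_aux (show (0:ℝ) ≤ α * β * x by positivity)).mul_left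
        (α * β * Real.exp (-α) * (x ^ j * Real.exp (-(β * x))))).congr fun k => ?_
      rw [pow_add]; ring
    · simp only [Pi.mul_apply, cdens, Set.indicator_of_notMem hx, ENNReal.ofReal_zero, zero_mul]
  rw [hfun, lintegral_indicator measurableSet_Ioi,
    lintegral_tsum (fun k => (by fun_prop : Measurable fun x : ℝ =>
      ENNReal.ofReal ((α * β * Real.exp (-α) *
        ((α * β) ^ k / ((Nat.factorial k : ℝ) * (Nat.factorial (k + 1) : ℝ)))) *
        (x ^ (k + j) * Real.exp (-(β * x))))).aemeasurable)]
  have hterm : ∀ k : ℕ, (∫⁻ x in Ioi (0:ℝ), ENNReal.ofReal ((α * β * Real.exp (-α) *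
        ((α * β) ^ k / ((Nat.factorial k : ℝ) * (Nat.factorial (k + 1) : ℝ)))) *
        (x ^ (k + j) * Real.exp (-(β * x)))))
      = ENNReal.ofReal ((Real.exp (-α) / β ^ j) * (α ^ (k + 1) *
          ((Nat.factorial (k + j) : ℝ) / ((Nat.factorial k : ℝ) * (Nat.factorial (k + 1) : ℝ))))) := by
    intro k
    simp_rw [ENNReal.ofReal_mul (show (0:ℝ) ≤ α * β * Real.exp (-α) *
      ((α * β) ^ k / ((Nat.factorial k : ℝ) * (Nat.factorial (k + 1) : ℝ))) by positivity)]
    rw [lintegral_const_mul _ (by fun_prop), gamma_int hβ,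
      ← ENNReal.ofReal_mul (by positivity)]
    congr 1
    have hf1 : ((Nat.factorial k : ℝ)) ≠ 0 := by positivity
    have hf2 : ((Nat.factorial (k + 1) : ℝ)) ≠ 0 := by positivity
    have hβ' : β ≠ 0 := hβ.ne'
    rw [mul_pow]
    field_simp
    ring
  rw [tsum_congr hterm, ← ENNReal.ofReal_tsum_of_nonneg (fun k => by positivity)
    (hsum.mul_left _), tsum_mul_left]

lemma tsum_exp (α : ℝ) : ∑' k : ℕ, α ^ k / (Nat.factorial k : ℝ) = Real.exp α := by
  rw [Real.exp_eq_exp_ℝ, NormedSpace.exp_eq_tsum_div]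

lemma feq0 (α : ℝ) (k : ℕ) :
    α ^ (k + 1) * ((Nat.factorial (k + 0) : ℝ) /
      ((Nat.factorial k : ℝ) * (Nat.factorial (k + 1) : ℝ)))
    = α ^ (k + 1) / (Nat.factorial (k + 1) : ℝ) := by
  have hf1 : ((Nat.factorial k : ℝ)) ≠ 0 := by positivity
  have hf2 : ((Nat.factorial (k + 1) : ℝ)) ≠ 0 := by positivity
  rw [Nat.add_zero]
  field_simp
  ring

lemma feq1 (α : ℝ) (k : ℕ) :
    α ^ (k + 1) * ((Nat.factorial (k + 1) : ℝ) /
      ((Nat.factorial k : ℝ) * (Nat.factorial (k + 1) : ℝ)))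
    = α * (α ^ k / (Nat.factorial k : ℝ)) := by
  have hf1 : ((Nat.factorial k : ℝ)) ≠ 0 := by positivity
  have hf2 : ((Nat.factorial (k + 1) : ℝ)) ≠ 0 := by positivity
  field_simp
  ring

lemma feq2 (α : ℝ) (k : ℕ) :
    α ^ (k + 1) * ((Nat.factorial (k + 2) : ℝ) /
      ((Nat.factorial k : ℝ) * (Nat.factorial (k + 1) : ℝ)))
    = ((k : ℝ) + 2) * α ^ (k + 1) / (Nat.factorial k : ℝ) := by
  have hf1 : ((Nat.factorial k : ℝ)) ≠ 0 := by positivity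
  have hf2 : ((Nat.factorial (k + 1) : ℝ)) ≠ 0 := by positivity
  rw [show Nat.factorial (k + 2) = (k + 2) * Nat.factorial (k + 1) from Nat.factorial_succ (k + 1)]
  push_cast
  field_simp

lemma sumU {α : ℝ} (hα : 0 ≤ α) :
    Summable fun k : ℕ => (k : ℝ) * α ^ k / (Nat.factorial k : ℝ) := by
  refine Summable.of_nonneg_of_le (fun k => by positivity) (fun k => ?_)
    (Real.summable_pow_div_factorial (2 * α))
  have h2 : ((k : ℝ)) ≤ 2 ^ k := by exact_mod_cast (Nat.lt_two_pow_self (n := k)).le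
  calc (k : ℝ) * α ^ k / (Nat.factorial k : ℝ)
      ≤ 2 ^ k * α ^ k / (Nat.factorial k : ℝ) := by gcongr
    _ = (2 * α) ^ k / (Nat.factorial k : ℝ) := by rw [mul_pow]

lemma sumS2 {α : ℝ} (hα : 0 ≤ α) :
    Summable fun k : ℕ => ((k : ℝ) + 2) * α ^ (k + 1) / (Nat.factorial k : ℝ) := by
  refine Summable.of_nonneg_of_le (fun k => by positivity) (fun k => ?_)
    ((Real.summable_pow_div_factorial (2 * α)).mul_left (2 * α))
  have h2 : ((k : ℝ) + 2) ≤ 2 ^ (k + 1) := by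
    exact_mod_cast Nat.succ_le_of_lt (Nat.lt_two_pow_self (n := k + 1))
  calc ((k : ℝ) + 2) * α ^ (k + 1) / (Nat.factorial k : ℝ)
      ≤ 2 ^ (k + 1) * α ^ (k + 1) / (Nat.factorial k : ℝ) := by gcongr
    _ = 2 * α * ((2 * α) ^ k / (Nat.factorial k : ℝ)) := by rw [mul_pow]; ring

lemma val0 (α : ℝ) : ∑' k : ℕ, α ^ (k + 1) / (Nat.factorial (k + 1) : ℝ) = Real.exp α - 1 := by
  have h := Summable.tsum_eq_zero_add (Real.summable_pow_div_factorial α)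
  rw [tsum_exp] at h
  simp only [pow_zero, Nat.factorial_zero, Nat.cast_one, div_one] at h
  linarith

lemma valU {α : ℝ} (hα : 0 ≤ α) :
    ∑' k : ℕ, (k : ℝ) * α ^ k / (Nat.factorial k : ℝ) = α * Real.exp α := by
  rw [Summable.tsum_eq_zero_add (sumU hα)]
  simp only [Nat.cast_zero, zero_mul, zero_div, zero_add]
  rw [tsum_congr (show ∀ k : ℕ, (((k + 1 : ℕ)) : ℝ) * α ^ (k + 1) / (Nat.factorial (k + 1) : ℝ)
      = α * (α ^ k / (Nat.factorial k : ℝ)) from fun k => by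
    have hf1 : ((Nat.factorial k : ℝ)) ≠ 0 := by positivity
    rw [Nat.factorial_succ]
    push_cast
    field_simp
    ring)]
  rw [tsum_mul_left, tsum_exp]

lemma val2 {α : ℝ} (hα : 0 ≤ α) :
    ∑' k : ℕ, ((k : ℝ) + 2) * α ^ (k + 1) / (Nat.factorial k : ℝ)
      = (α ^ 2 + 2 * α) * Real.exp α := by
  rw [show (fun k : ℕ => ((k : ℝ) + 2) * α ^ (k + 1) / (Nat.factorial k : ℝ))
      = fun k : ℕ => α * ((k : ℝ) * α ^ k / (Nat.factorial k : ℝ))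
          + 2 * α * (α ^ k / (Nat.factorial k : ℝ)) from funext fun k => by
    have hf1 : ((Nat.factorial k : ℝ)) ≠ 0 := by positivity
    field_simp
    ring]
  rw [Summable.tsum_add ((sumU hα).mul_left α) ((Real.summable_pow_div_factorial α).mul_left (2 * α)),
    tsum_mul_left, tsum_mul_left, valU hα, tsum_exp]
  ring


lemma besselMeasure_eq (α β : ℝ) : besselMeasure α β
    = ENNReal.ofReal (Real.exp (-α)) • Measure.dirac (0 : ℝ)
      + volume.withDensity (cdens α β) := rfl

lemma lint_bessel (α β : ℝ) (f : ℝ → ℝ≥0∞) :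
    ∫⁻ x, f x ∂(besselMeasure α β)
      = ENNReal.ofReal (Real.exp (-α)) * f 0
        + ∫⁻ x, f x ∂(volume.withDensity (cdens α β)) := by
  rw [besselMeasure_eq, lintegral_add_measure, lintegral_smul_measure, lintegral_dirac, smul_eq_mul]

lemma bessel_M1 {α β : ℝ} (hα : 0 < α) (hβ : 0 < β) :
    ∫⁻ x, ENNReal.ofReal x ∂(besselMeasure α β) = ENNReal.ofReal (α / β) := by
  have h1 : (fun x : ℝ => ENNReal.ofReal x) = fun x : ℝ => ENNReal.ofReal (x ^ 1) := by
    funext x; rw [pow_one]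
  rw [h1, lint_bessel, moment_cont hα hβ 1
    (((Real.summable_pow_div_factorial α).mul_left α).congr fun k => (feq1 α k).symm)]
  rw [tsum_congr (feq1 α), tsum_mul_left, tsum_exp]
  simp only [pow_one, ENNReal.ofReal_zero, mul_zero, zero_add, zero_pow, one_ne_zero,
    ne_eq, not_false_iff]
  congr 1
  rw [Real.exp_neg]
  field_simp

lemma bessel_M2 {α β : ℝ} (hα : 0 < α) (hβ : 0 < β) :
    ∫⁻ x, ENNReal.ofReal (x ^ (2 : ℕ)) ∂(besselMeasure α β)
      = ENNReal.ofReal ((α ^ 2 + 2 * α) / β ^ 2) := by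
  rw [lint_bessel, moment_cont hα hβ 2 ((sumS2 hα.le).congr fun k => (feq2 α k).symm)]
  rw [tsum_congr (feq2 α), val2 hα.le]
  norm_num
  congr 1
  rw [Real.exp_neg]
  have := Real.exp_ne_zero α
  field_simp

lemma bessel_mass {α β : ℝ} (hα : 0 < α) (hβ : 0 < β) :
    besselMeasure α β Set.univ = 1 := by
  have h1 : (fun _ : ℝ => (1 : ℝ≥0∞)) = fun x : ℝ => ENNReal.ofReal (x ^ (0 : ℕ)) := by
    funext x; simp
  have hsum : Summable fun k : ℕ => α ^ (k + 1) / (Nat.factorial (k + 1) : ℝ) :=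
    (summable_nat_add_iff 1).mpr (Real.summable_pow_div_factorial α)
  rw [← lintegral_one, h1, lint_bessel, moment_cont hα hβ 0
    (hsum.congr fun k => (feq0 α k).symm)]
  rw [tsum_congr (feq0 α), val0]
  simp only [pow_zero, div_one, ENNReal.ofReal_one, mul_one]
  rw [show Real.exp (-α) * (Real.exp α - 1) = 1 - Real.exp (-α) by
    rw [mul_sub, ← Real.exp_add]; simp]
  rw [← ENNReal.ofReal_add (Real.exp_nonneg _) (by
    have : Real.exp (-α) ≤ 1 := Real.exp_le_one_iff.mpr (by linarith)
    linarith)]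
  norm_num

lemma bessel_ae_nonneg (α β : ℝ) : ∀ᵐ x ∂(besselMeasure α β), 0 ≤ x := by
  rw [ae_iff]
  have hset : {x : ℝ | ¬ 0 ≤ x} = Iio (0 : ℝ) := by ext x; simp [not_le]
  rw [hset, besselMeasure_eq, Measure.add_apply, Measure.smul_apply,
    Measure.dirac_apply' _ measurableSet_Iio, withDensity_apply _ measurableSet_Iio]
  have hz : ∫⁻ x in Iio (0:ℝ), cdens α β x ∂volume = 0 := by
    rw [setLIntegral_congr_fun_ae measurableSet_Iio
      (ae_of_all _ (fun x (hx : x ∈ Iio (0:ℝ)) => show cdens α β x = 0 by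
        rw [cdens, Set.indicator_of_notMem (by simp at hx ⊢; linarith), ENNReal.ofReal_zero])),
      lintegral_zero]
  rw [hz]
  simp

lemma lint_rpow {α β κ : ℝ} (hκ : 0 ≤ κ) :
    ∫⁻ x, ENNReal.ofReal (x ^ κ) ∂(besselMeasure α β)
      = ∫⁻ x, (ENNReal.ofReal x) ^ κ ∂(besselMeasure α β) :=
  lintegral_congr_ae (by
    filter_upwards [bessel_ae_nonneg α β] with x hx
    exact (ENNReal.ofReal_rpow_of_nonneg hx hκ).symm)

theorem bessel_moment_lower_bound (κ δ : ℝ) (hκ : 0 < κ) (hδ : 0 < δ) :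
    ∃ C₂ : ℝ, 0 < C₂ ∧ ∀ α β : ℝ, δ ≤ α → 0 < β →
      ENNReal.ofReal (C₂ * α ^ κ / β ^ κ) ≤
        ∫⁻ x, ENNReal.ofReal (x ^ κ) ∂ besselMeasure α β := by
  rcases lt_trichotomy κ 1 with hlt | heq | hgt
  · -- 0 < κ < 1
    have h1κ : (0:ℝ) < 1 - κ := by linarith
    have h2κ : (0:ℝ) < 2 - κ := by linarith
    refine ⟨(δ / (δ + 2)) ^ (1 - κ), Real.rpow_pos_of_pos (by positivity) _, fun α β hαδ hβ => ?_⟩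
    have hα : 0 < α := hδ.trans_le hαδ
    set m := besselMeasure α β with hm
    set C₂ : ℝ := (δ / (δ + 2)) ^ (1 - κ) with hC₂
    have hα2 : (0:ℝ) < α ^ 2 + 2 * α := by positivity
    have hpq : Real.HolderConjugate (2 - κ) ((2 - κ) / (1 - κ)) := by
      rw [Real.holderConjugate_iff_eq_conjExponent (by linarith)]
      congr 1; ring
    have holder := ENNReal.lintegral_mul_le_Lp_mul_Lq m hpq
      (f := fun x => (ENNReal.ofReal x) ^ (κ / (2 - κ)))
      (g := fun x => (ENNReal.ofReal x) ^ (2 * (1 - κ) / (2 - κ)))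
      (by fun_prop) (by fun_prop)
    have hfg : (fun x : ℝ => ((ENNReal.ofReal x) ^ (κ / (2 - κ))) *
        ((ENNReal.ofReal x) ^ (2 * (1 - κ) / (2 - κ)))) = fun x : ℝ => ENNReal.ofReal x := by
      funext x
      rw [← ENNReal.rpow_add_of_nonneg _ _ (div_nonneg hκ.le h2κ.le)
        (div_nonneg (by linarith) h2κ.le),
        show κ / (2 - κ) + 2 * (1 - κ) / (2 - κ) = 1 by field_simp; ring, ENNReal.rpow_one]
    have hfp : (fun x : ℝ => ((ENNReal.ofReal x) ^ (κ / (2 - κ))) ^ (2 - κ))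
        = fun x : ℝ => (ENNReal.ofReal x) ^ κ := by
      funext x
      rw [← ENNReal.rpow_mul, div_mul_cancel₀ _ h2κ.ne']
    have hgq : (fun x : ℝ => ((ENNReal.ofReal x) ^ (2 * (1 - κ) / (2 - κ))) ^ ((2 - κ) / (1 - κ)))
        = fun x : ℝ => (ENNReal.ofReal x) ^ (2:ℝ) := by
      funext x
      rw [← ENNReal.rpow_mul,
        show 2 * (1 - κ) / (2 - κ) * ((2 - κ) / (1 - κ)) = 2 by field_simp]
    simp only [Pi.mul_apply] at holder
    rw [show (∫⁻ a, (ENNReal.ofReal a) ^ (κ / (2 - κ)) * (ENNReal.ofReal a) ^ (2 * (1 - κ) / (2 - κ)) ∂m)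
        = ∫⁻ a, ENNReal.ofReal a ∂m from lintegral_congr fun a => congrFun hfg a,
      show (∫⁻ a, ((ENNReal.ofReal a) ^ (κ / (2 - κ))) ^ (2 - κ) ∂m)
        = ∫⁻ a, (ENNReal.ofReal a) ^ κ ∂m from lintegral_congr fun a => congrFun hfp a,
      show (∫⁻ a, ((ENNReal.ofReal a) ^ (2 * (1 - κ) / (2 - κ))) ^ ((2 - κ) / (1 - κ)) ∂m)
        = ∫⁻ a, (ENNReal.ofReal a) ^ (2:ℝ) ∂m from lintegral_congr fun a => congrFun hgq a,
      bessel_M1 hα hβ] at holder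
    have hsq : (∫⁻ a, (ENNReal.ofReal a) ^ (2:ℝ) ∂m) = ENNReal.ofReal ((α ^ 2 + 2 * α) / β ^ 2) := by
      rw [← bessel_M2 hα hβ]
      refine lintegral_congr_ae ?_
      filter_upwards [bessel_ae_nonneg α β] with x hx
      rw [ENNReal.rpow_two, ← ENNReal.ofReal_pow hx]
    rw [hsq] at holder
    -- raise Hölder to power (2 - κ)
    set A := ∫⁻ a, (ENNReal.ofReal a) ^ κ ∂m with hA
    set B := ENNReal.ofReal ((α ^ 2 + 2 * α) / β ^ 2) with hB
    have hXp : (ENNReal.ofReal (α / β)) ^ (2 - κ) ≤ A * B ^ (1 - κ) := by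
      calc (ENNReal.ofReal (α / β)) ^ (2 - κ)
          ≤ (A ^ (1 / (2 - κ)) * B ^ (1 / ((2 - κ) / (1 - κ)))) ^ (2 - κ) :=
            ENNReal.rpow_le_rpow holder h2κ.le
        _ = A * B ^ (1 - κ) := by
            rw [ENNReal.mul_rpow_of_nonneg _ _ h2κ.le, ← ENNReal.rpow_mul,
              ← ENNReal.rpow_mul, one_div_mul_cancel h2κ.ne',
              show 1 / ((2 - κ) / (1 - κ)) * (2 - κ) = 1 - κ by field_simp, ENNReal.rpow_one]
    have hBpow : B ^ (1 - κ) = ENNReal.ofReal (((α ^ 2 + 2 * α) / β ^ 2) ^ (1 - κ)) :=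
      ENNReal.ofReal_rpow_of_nonneg (by positivity) h1κ.le
    have hBne : B ^ (1 - κ) ≠ 0 :=
      (ENNReal.rpow_pos (ENNReal.ofReal_pos.mpr (by positivity)) ENNReal.ofReal_ne_top).ne'
    have hBtop : B ^ (1 - κ) ≠ ⊤ := ENNReal.rpow_ne_top_of_nonneg h1κ.le ENNReal.ofReal_ne_top
    rw [lint_rpow hκ.le]
    rw [← ENNReal.mul_le_mul_iff_left hBne hBtop]
    -- real inequality
    have key : δ / (δ + 2) * (α ^ 2 + 2 * α) ≤ α ^ 2 := by
      rw [div_mul_eq_mul_div, div_le_iff₀ (by positivity)]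
      nlinarith
    have hkey2 : C₂ * (α ^ 2 + 2 * α) ^ (1 - κ) ≤ (α ^ 2) ^ (1 - κ) := by
      rw [hC₂, ← Real.mul_rpow (by positivity) hα2.le]
      exact Real.rpow_le_rpow (by positivity) key h1κ.le
    have hreal : C₂ * α ^ κ / β ^ κ * ((α ^ 2 + 2 * α) / β ^ 2) ^ (1 - κ)
        ≤ (α / β) ^ (2 - κ) := by
      have e1 : ((α:ℝ) ^ 2) ^ (1 - κ) = α ^ (2 * (1 - κ)) := by
        rw [← Real.rpow_natCast α 2, ← Real.rpow_mul hα.le]; norm_num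
      have e2 : ((β:ℝ) ^ 2) ^ (1 - κ) = β ^ (2 * (1 - κ)) := by
        rw [← Real.rpow_natCast β 2, ← Real.rpow_mul hβ.le]; norm_num
      calc C₂ * α ^ κ / β ^ κ * ((α ^ 2 + 2 * α) / β ^ 2) ^ (1 - κ)
          = (C₂ * (α ^ 2 + 2 * α) ^ (1 - κ)) * α ^ κ / (β ^ κ * ((β:ℝ) ^ 2) ^ (1 - κ)) := by
            rw [Real.div_rpow hα2.le (by positivity)]; ring
        _ ≤ ((α ^ 2) ^ (1 - κ)) * α ^ κ / (β ^ κ * ((β:ℝ) ^ 2) ^ (1 - κ)) := by gcongr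
        _ = (α / β) ^ (2 - κ) := by
            rw [e1, e2, Real.div_rpow hα.le hβ.le,
              show (2 - κ) = 2 * (1 - κ) + κ by ring,
              Real.rpow_add hα, Real.rpow_add hβ]
            ring
    calc ENNReal.ofReal (C₂ * α ^ κ / β ^ κ) * B ^ (1 - κ)
        = ENNReal.ofReal (C₂ * α ^ κ / β ^ κ * ((α ^ 2 + 2 * α) / β ^ 2) ^ (1 - κ)) := by
          rw [hBpow, ← ENNReal.ofReal_mul (by positivity)]
      _ ≤ ENNReal.ofReal ((α / β) ^ (2 - κ)) := ENNReal.ofReal_le_ofReal hreal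
      _ = (ENNReal.ofReal (α / β)) ^ (2 - κ) :=
          (ENNReal.ofReal_rpow_of_nonneg (by positivity) h2κ.le).symm
      _ ≤ A * B ^ (1 - κ) := hXp
  · subst heq
    refine ⟨1, one_pos, fun α β hαδ hβ => ?_⟩
    have hα : 0 < α := hδ.trans_le hαδ
    simp only [Real.rpow_one, one_mul]
    exact le_of_eq (bessel_M1 hα hβ).symm
  · refine ⟨1, one_pos, fun α β hαδ hβ => ?_⟩
    have hα : 0 < α := hδ.trans_le hαδ
    set m := besselMeasure α β with hm
    have hpq : Real.HolderConjugate κ (κ / (κ - 1)) :=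
      (Real.holderConjugate_iff_eq_conjExponent hgt).mpr rfl
    have holder := ENNReal.lintegral_mul_le_Lp_mul_Lq m hpq
      (f := fun x => ENNReal.ofReal x) (g := fun _ => 1)
      (by fun_prop) aemeasurable_const
    simp only [Pi.mul_apply, mul_one, ENNReal.one_rpow, lintegral_one] at holder
    rw [bessel_mass hα hβ, ENNReal.one_rpow, mul_one, bessel_M1 hα hβ] at holder
    have hA : ENNReal.ofReal (α / β) ^ κ ≤ ∫⁻ x, (ENNReal.ofReal x) ^ κ ∂m := by
      calc ENNReal.ofReal (α / β) ^ κ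
          ≤ ((∫⁻ x, (ENNReal.ofReal x) ^ κ ∂m) ^ (1 / κ)) ^ κ :=
            ENNReal.rpow_le_rpow holder hκ.le
        _ = ∫⁻ x, (ENNReal.ofReal x) ^ κ ∂m := by
            rw [← ENNReal.rpow_mul, one_div_mul_cancel hκ.ne', ENNReal.rpow_one]
    rw [lint_rpow hκ.le]
    refine le_trans (le_of_eq ?_) hA
    rw [one_mul, ← Real.div_rpow hα.le hβ.le,
      ENNReal.ofReal_rpow_of_nonneg (by positivity) hκ.le]
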